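/- Let n be even with n ≥ 8 and let H be any simple graph on n/2 vertices. Then the join G = H ∨ (K̄_{(n−4)/2} ∪ K₂) is not 2-vertex-fault hamiltonian: deleting any two vertices of the H-side from G leaves a non-hamiltonian graph. -/

import Mathlib

open SimpleGraph

set_option linter.unusedVariables false

/-- The degree of a vertex: the number of its neighbors. -/
noncomputable def deg {α : Type*} (G : SimpleGraph α) (v : α) : ℕ :=
  (G.neighborSet v).ncard

/-- The join of two (disjoint) graphs: both graphs together with all cross edges. -/
def gJoin {α β : Type*} (G : SimpleGraph α) (H : SimpleGraph β) : SimpleGraph (α ⊕ β) where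
  Adj u v := match u, v with
    | Sum.inl a, Sum.inl b => G.Adj a b
    | Sum.inr a, Sum.inr b => H.Adj a b
    | _, _ => True
  symm := by
    constructor
    rintro (a | a) (b | b) h
    · exact G.symm.symm _ _ h
    · trivial
    · trivial
    · exact H.symm.symm _ _ h
  loopless := by
    constructor
    rintro (a | a) h
    · exact G.loopless.irrefl a h
    · exact H.loopless.irrefl a h

/-- `kK2 k` : the disjoint union of `k` copies of `K₂`. -/
def kK2 (k : ℕ) : SimpleGraph (Fin k × Fin 2) where
  Adj p q := p.1 = q.1 ∧ p.2 ≠ q.2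
  symm := ⟨fun p q h => ⟨h.1.symm, h.2.symm⟩⟩
  loopless := ⟨fun p h => h.2 rfl⟩

/-- `G − F`: the subgraph of `G` induced on the complement of the vertex set `F`. -/
def delVerts {W : Type*} [Fintype W] [DecidableEq W] (G : SimpleGraph W) (F : Finset W) :
    SimpleGraph ((Fᶜ : Finset W) : Set W) :=
  G.induce ((Fᶜ : Finset W) : Set W)

private lemma walk_darts_countP {V : Type*} {G : SimpleGraph V} (pS : V → Bool) :
    ∀ {u v : V} (p : G.Walk u v),
      p.length + (bif pS u then 0 else 1) + (bif pS v then 0 else 1) ≤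
        p.darts.countP (fun d => pS d.fst && pS d.snd) +
          2 * p.support.countP (fun x => !pS x) := by
  intro u v p
  induction p with
  | nil =>
      rename_i w
      cases h : pS w <;> simp [h]
  | @cons u v w h q ih =>
      simp only [SimpleGraph.Walk.length_cons, SimpleGraph.Walk.darts_cons,
        SimpleGraph.Walk.support_cons, List.countP_cons]
      cases hu : pS u <;> cases hv : pS v <;> simp_all <;> omega

/-- For even `n ≥ 8` and any `H` on `n/2` vertices, the join
`G = H ∨ (K̄_{(n−4)/2} ∪ K₂)` is not 2-vertex-fault hamiltonian: deleting any two `H`-side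
vertices leaves a non-hamiltonian graph. -/
theorem statement_17 (n : ℕ) (heven : Even n) (hn8 : 8 ≤ n)
    (H : SimpleGraph (Fin (n / 2)))
    (G : SimpleGraph (Fin (n / 2) ⊕ (Fin ((n - 4) / 2) ⊕ Fin 2)))
    (hG : G = gJoin H ((⊥ : SimpleGraph (Fin ((n - 4) / 2))) ⊕g (⊤ : SimpleGraph (Fin 2)))) :
    ¬(∀ F : Finset (Fin (n / 2) ⊕ (Fin ((n - 4) / 2) ⊕ Fin 2)), F.card ≤ 2 →
        (delVerts G F).IsHamiltonian) ∧
    (∀ a b : Fin (n / 2), a ≠ b →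
      ¬(delVerts G {Sum.inl a, Sum.inl b}).IsHamiltonian) := by
  obtain ⟨k, hk⟩ := heven
  have hk4 : 4 ≤ k := by omega
  have hn2 : n / 2 = k := by omega
  subst hG
  set V : Type := Fin (n / 2) ⊕ (Fin ((n - 4) / 2) ⊕ Fin 2) with hV
  have key : ∀ a b : Fin (n / 2), a ≠ b →
      ¬(delVerts (gJoin H ((⊥ : SimpleGraph (Fin ((n - 4) / 2))) ⊕g (⊤ : SimpleGraph (Fin 2))))
          {Sum.inl a, Sum.inl b}).IsHamiltonian := by
    intro a b hab hham
    set GG := gJoin H ((⊥ : SimpleGraph (Fin ((n - 4) / 2))) ⊕g (⊤ : SimpleGraph (Fin 2))) with hGG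
    set F : Finset V := {Sum.inl a, Sum.inl b} with hF
    have hFcard : F.card = 2 := by
      rw [hF]
      rw [Finset.card_insert_of_notMem (by
        simp only [Finset.mem_singleton]
        exact fun hc => hab (Sum.inl.inj hc)), Finset.card_singleton]
    have hVcard : Fintype.card V = n / 2 + ((n - 4) / 2 + 2) := by
      simp [hV, Fintype.card_sum, Fintype.card_fin]
    have hcard : Fintype.card ((Fᶜ : Finset V) : Set V) = n - 2 := by
      rw [← Set.toFinset_card, Finset.toFinset_coe, Finset.card_compl, hFcard, hVcard]
      omega
    have hne : Fintype.card ((Fᶜ : Finset V) : Set V) ≠ 1 := by omega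
    obtain ⟨v0, p, hp⟩ := hham hne
    -- the two K₂ vertices
    have hm0 : (Sum.inr (Sum.inr 0) : V) ∈ ((Fᶜ : Finset V) : Set V) := by
      simp [hF]
    have hm1 : (Sum.inr (Sum.inr 1) : V) ∈ ((Fᶜ : Finset V) : Set V) := by
      simp [hF]
    set k0 : ((Fᶜ : Finset V) : Set V) := ⟨Sum.inr (Sum.inr 0), hm0⟩ with hk0
    set k1 : ((Fᶜ : Finset V) : Set V) := ⟨Sum.inr (Sum.inr 1), hm1⟩ with hk1
    set pS : ((Fᶜ : Finset V) : Set V) → Bool := fun x => (x : V).isRight with hpS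
    -- every dart with both endpoints on the right has edge s(k0,k1)
    have hSS : ∀ d ∈ p.darts, (pS d.fst && pS d.snd) = true → d.edge = s(k0, k1) := by
      intro d hd hsd
      rw [Bool.and_eq_true] at hsd
      obtain ⟨s, hs⟩ := Sum.isRight_iff.mp hsd.1
      obtain ⟨t, ht⟩ := Sum.isRight_iff.mp hsd.2
      have hadj : GG.Adj d.fst.val d.snd.val := d.adj
      rw [hs, ht] at hadj
      have hadj' : ((⊥ : SimpleGraph (Fin ((n - 4) / 2))) ⊕g (⊤ : SimpleGraph (Fin 2))).Adj s t :=
        hadj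
      rcases s with i | i <;> rcases t with j | j <;>
        simp only [SimpleGraph.sum_adj, SimpleGraph.bot_adj, SimpleGraph.top_adj] at hadj'
      have hfst : d.fst = k0 ∨ d.fst = k1 := by
        rcases (by omega : (i : ℕ) = 0 ∨ (i : ℕ) = 1) with h0 | h0
        · left; apply Subtype.ext; rw [hs]; congr 2; exact Fin.ext h0
        · right; apply Subtype.ext; rw [hs]; congr 2; exact Fin.ext h0
      have hsnd : d.snd = k0 ∨ d.snd = k1 := by
        rcases (by omega : (j : ℕ) = 0 ∨ (j : ℕ) = 1) with h0 | h0
        · left; apply Subtype.ext; rw [ht]; congr 2; exact Fin.ext h0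
        · right; apply Subtype.ext; rw [ht]; congr 2; exact Fin.ext h0
      have hij : i ≠ j := hadj'
      have hne01 : d.fst ≠ d.snd := d.fst_ne_snd
      have hedge : d.edge = s(d.fst, d.snd) := rfl
      rcases hfst with h1' | h1' <;> rcases hsnd with h2' | h2'
      · exact absurd (h1'.trans h2'.symm) hne01
      · rw [hedge, h1', h2']
      · rw [hedge, h1', h2', Sym2.eq_swap]
      · exact absurd (h1'.trans h2'.symm) hne01
    -- counting
    have h3 := walk_darts_countP pS p
    have hlen : p.length = n - 2 := by rw [hp.length_eq, hcard]
    set t := p.support.tail with htdef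
    have htnodup : t.Nodup := by
      rw [htdef, ← SimpleGraph.Walk.support_tail_of_not_nil p hp.isCycle.not_nil]
      exact hp.isHamiltonian_tail.isPath.support_nodup
    -- bound the number of left vertices in the tail
    have htcount : t.countP (fun x => !pS x) ≤ k - 2 := by
      set u := t.filter (fun x => !pS x) with hu
      have hun : u.Nodup := htnodup.filter _
      have hleft : ∀ x ∈ u, ∃ c : Fin (n / 2), (x : V) = Sum.inl c ∧ c ≠ a ∧ c ≠ b := by
        intro x hx
        have hxp := List.of_mem_filter hx
        rcases hxval : (x : V) with c | c
        · refine ⟨c, rfl, ?_, ?_⟩ <;>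
          · intro hc
            have hmem := x.2
            rw [hxval, hc] at hmem
            simp [hF] at hmem
        · exfalso
          rw [hpS] at hxp
          simp only [Bool.not_eq_true'] at hxp
          rw [hxval] at hxp
          simp at hxp
      have h0k : 0 < n / 2 := by omega
      set g : ((Fᶜ : Finset V) : Set V) → Fin (n / 2) :=
        fun x => Sum.elim id (fun _ => ⟨0, h0k⟩) (x : V) with hg
      have hmapnodup : (u.map g).Nodup := by
        refine hun.map_on ?_
        intro x hx y hy hxy
        obtain ⟨c, hc, _, _⟩ := hleft x hx
        obtain ⟨c', hc', _, _⟩ := hleft y hy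
        apply Subtype.ext
        rw [hc, hc']
        rw [hg] at hxy
        simp only [hc, hc', Sum.elim_inl, id_eq] at hxy
        rw [hxy]
      have hsub : (u.map g).toFinset ⊆ (Finset.univ.erase a).erase b := by
        intro z hz
        rw [List.mem_toFinset, List.mem_map] at hz
        obtain ⟨x, hx, hgx⟩ := hz
        obtain ⟨c, hc, hca, hcb⟩ := hleft x hx
        rw [hg] at hgx
        simp only [hc, Sum.elim_inl, id_eq] at hgx
        subst hgx
        simp [Finset.mem_erase, hca, hcb]
      have hcard2 : ((Finset.univ.erase a).erase b).card = k - 2 := by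
        rw [Finset.card_erase_of_mem (by simp [Ne.symm hab]),
          Finset.card_erase_of_mem (Finset.mem_univ a)]
        simp only [Finset.card_univ, Fintype.card_fin, hn2]
        omega
      calc t.countP (fun x => !pS x) = u.length := by rw [hu, List.countP_eq_length_filter]
        _ = (u.map g).length := (List.length_map _).symm
        _ = (u.map g).toFinset.card := (List.toFinset_card_of_nodup hmapnodup).symm
        _ ≤ ((Finset.univ.erase a).erase b).card := Finset.card_le_card hsub
        _ = k - 2 := hcard2
    -- assemble
    have hsupp : p.support.countP (fun x => !pS x) =
        (bif !pS v0 then 1 else 0) + t.countP (fun x => !pS x) := by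
      conv_lhs => rw [p.support_eq_cons]
      rw [List.countP_cons, ← htdef]
      cases pS v0 <;> simp <;> omega
    have hSS2 : 2 ≤ p.darts.countP (fun d => pS d.fst && pS d.snd) := by
      rw [hsupp, hlen] at h3
      cases hv0 : pS v0 <;> rw [hv0] at h3 <;> simp only [cond_true, cond_false,
        Bool.not_true, Bool.not_false] at h3 <;> omega
    have hcount : p.darts.countP (fun d => pS d.fst && pS d.snd) ≤
        p.edges.count s(k0, k1) := by
      have hE : p.edges = p.darts.map SimpleGraph.Dart.edge := rfl
      rw [hE, List.count_eq_countP, List.countP_map]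
      apply List.countP_mono_left
      intro d hd hpd
      simp only [Function.comp_apply, beq_iff_eq]
      exact hSS d hd hpd
    have hnodup : p.edges.count s(k0, k1) ≤ 1 :=
      List.nodup_iff_count_le_one.mp hp.isCycle.edges_nodup _
    omega
  refine ⟨fun hall => ?_, key⟩
  have h01 : (⟨0, by omega⟩ : Fin (n / 2)) ≠ ⟨1, by omega⟩ := by
    simp [Fin.ext_iff]
  exact key _ _ h01 (hall _ ((Finset.card_insert_le _ _).trans (by simp)))
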